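/- If the run from o terminates at d, then the run profile x(G,o,d) is the unique switching flow minimizing the total sum Σ_e x(e) over all switching flows; indeed it is the least element of the set of switching flows under the componentwise order. -/

import Mathlib

open scoped Classical

/-- A switch graph: every vertex has an even successor `s0 v` and an odd successor `s1 v`. -/
structure SwitchGraph (V : Type) where
  s0 : V → V
  s1 : V → V

namespace SwitchGraph

variable {V : Type}

/-- The successor of `v` along the edge of parity `b` (`false` = even, `true` = odd). -/
def succ (G : SwitchGraph V) (v : V) (b : Bool) : V :=
  if b then G.s1 v else G.s0 v

/-- One step of the run: move to the currently active successor and flip the switch. -/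
def step [DecidableEq V] (G : SwitchGraph V) (p : V × (V → Bool)) : V × (V → Bool) :=
  (G.succ p.1 (p.2 p.1), Function.update p.2 p.1 (!p.2 p.1))

/-- The state of the run after `n` steps, starting at `o` with all switches even,
stopping (freezing) upon reaching `d`. -/
def run [DecidableEq V] (G : SwitchGraph V) (o d : V) (n : ℕ) : V × (V → Bool) :=
  (fun p => if p.1 = d then p else G.step p)^[n] (o, fun _ => false)

/-- The run from `o` terminates at `d`. -/
def Terminates [DecidableEq V] (G : SwitchGraph V) (o d : V) : Prop :=
  ∃ n, (G.run o d n).1 = d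

/-- Number of traversals of the outgoing edge of `v` of parity `b` during
the first `N` steps of the run. -/
def traversals [DecidableEq V] (G : SwitchGraph V) (o d : V) (N : ℕ) (v : V) (b : Bool) : ℕ :=
  ((Finset.range N).filter
    (fun n => (G.run o d n).1 = v ∧ v ≠ d ∧ (G.run o d n).2 v = b)).card

/-- Total weight on edges leaving `v`. -/
def outflow {M : Type} [AddCommMonoid M] (x : V → Bool → M) (v : V) : M :=
  x v false + x v true

/-- Total weight on edges entering `v`. -/
def inflow [Fintype V] [DecidableEq V] (G : SwitchGraph V) {M : Type} [AddCommMonoid M]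
    (x : V → Bool → M) (v : V) : M :=
  ∑ u : V, ∑ b : Bool, if G.succ u b = v then x u b else 0

/-- A switching flow: flow conservation of value 1 from `o` to `d`, together with the
balancing condition `x v true ≤ x v false ≤ x v true + 1` at every vertex. -/
def IsSwitchingFlow [Fintype V] [DecidableEq V] (G : SwitchGraph V) (o d : V)
    (x : V → Bool → ℕ) : Prop :=
  (∀ v, outflow x v + (if v = d then 1 else 0) = G.inflow x v + (if v = o then 1 else 0)) ∧
  (∀ v, x v true ≤ x v false ∧ x v false ≤ x v true + 1)

/-- The edge relation of the underlying directed graph `(V, E)`. -/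
def stepRel (G : SwitchGraph V) (a b : V) : Prop :=
  G.s0 a = b ∨ G.s1 a = b

/-- A dead end: a vertex with no directed path to `d` in `(V, E)`. -/
def DeadEnd (G : SwitchGraph V) (d w : V) : Prop :=
  ¬ Relation.ReflTransGen G.stepRel w d

/-- There is a directed walk of length `k` from `w` to `d` in `(V, E)`. -/
def Chain (G : SwitchGraph V) (w d : V) (k : ℕ) : Prop :=
  ∃ f : ℕ → V, f 0 = w ∧ f k = d ∧ ∀ i < k, G.stepRel (f i) (f (i + 1))

end SwitchGraph

open SwitchGraph


section Aux

variable {V : Type} [Fintype V] [DecidableEq V] (G : SwitchGraph V) (o d : V)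

lemma run_zero' : G.run o d 0 = (o, fun _ => false) := rfl

lemma run_succ' (n : ℕ) :
    G.run o d (n+1) = if (G.run o d n).1 = d then G.run o d n else G.step (G.run o d n) := by
  simp [SwitchGraph.run, Function.iterate_succ_apply']
  split_ifs <;> simp_all

lemma trav_succ (n : ℕ) (v : V) (b : Bool) :
    G.traversals o d (n+1) v b = G.traversals o d n v b +
      (if ((G.run o d n).1 = v ∧ v ≠ d ∧ (G.run o d n).2 v = b) then 1 else 0) := by
  unfold SwitchGraph.traversals
  rw [Finset.range_add_one, Finset.filter_insert]
  split
  · rw [Finset.card_insert_of_notMem (by simp)]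
  · simp

lemma trav_zero (v : V) (b : Bool) : G.traversals o d 0 v b = 0 := by
  simp [SwitchGraph.traversals]

lemma trav_d (n : ℕ) (b : Bool) : G.traversals o d n d b = 0 := by
  simp [SwitchGraph.traversals]

lemma ite_add_zero' (P : Prop) [Decidable P] (a b : ℕ) :
    (if P then a + b else 0) = (if P then a else 0) + (if P then b else 0) := by
  split <;> simp

lemma inflow_add (x y : V → Bool → ℕ) (v : V) :
    G.inflow (fun w c => x w c + y w c) v = G.inflow x v + G.inflow y v := by
  unfold SwitchGraph.inflow
  simp only [ite_add_zero', Finset.sum_add_distrib]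

lemma inflow_single (u₀ : V) (b₀ : Bool) (v : V) :
    G.inflow (fun w c => if w = u₀ ∧ c = b₀ then 1 else 0) v =
      (if G.succ u₀ b₀ = v then 1 else 0) := by
  unfold SwitchGraph.inflow
  rw [Finset.sum_eq_single u₀]
  · rw [Fintype.sum_bool]
    cases b₀ <;> simp
  · intro u _ hne
    simp [hne]
  · simp

lemma inflow_mono (x y : V → Bool → ℕ) (h : ∀ w c, x w c ≤ y w c) (v : V) :
    G.inflow x v ≤ G.inflow y v := by
  refine Finset.sum_le_sum fun u _ => Finset.sum_le_sum fun c _ => ?_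
  by_cases hs : G.succ u c = v <;> simp [hs, h u c]

lemma L1 (n : ℕ) (v : V) (hv : v ≠ d) :
    G.traversals o d n v false =
      G.traversals o d n v true + (if (G.run o d n).2 v then 1 else 0) := by
  induction n with
  | zero => simp [trav_zero, SwitchGraph.run]
  | succ n ih =>
    rw [trav_succ, trav_succ, run_succ']
    by_cases hd : (G.run o d n).1 = d
    · have hne : ¬ ((G.run o d n).1 = v) := by
        rw [hd]; exact fun h => hv h.symm
      have hne2 : ¬ (d = v) := fun h => hv h.symm
      simp [hd, hne, hne2, ih]
    · by_cases hu : (G.run o d n).1 = v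
      · subst hu
        cases hb : (G.run o d n).2 (G.run o d n).1 <;>
          simp_all [SwitchGraph.step, Function.update] <;> omega
      · have hnv : ¬ (v = (G.run o d n).1) := fun h => hu h.symm
        simp [hd, hu, hnv, SwitchGraph.step, Function.update, ih]

lemma L2 (n : ℕ) (v : V) :
    G.inflow (G.traversals o d n) v + (if v = o then 1 else 0) =
      SwitchGraph.outflow (G.traversals o d n) v +
        (if (G.run o d n).1 = v then 1 else 0) := by
  induction n with
  | zero =>
    simp [SwitchGraph.inflow, SwitchGraph.outflow, trav_zero, SwitchGraph.run, eq_comm]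
  | succ n ih =>
    by_cases hd : (G.run o d n).1 = d
    · have hT : G.traversals o d (n+1) = G.traversals o d n := by
        funext w c
        rw [trav_succ]
        have : ¬ ((G.run o d n).1 = w ∧ w ≠ d ∧ (G.run o d n).2 w = c) := by
          rintro ⟨h1, h2, -⟩; exact h2 (h1.symm.trans hd)
        simp [this]
      rw [hT, run_succ', if_pos hd]
      exact ih
    · have hT : G.traversals o d (n+1) = fun w c => G.traversals o d n w c +
          (if w = (G.run o d n).1 ∧ c = (G.run o d n).2 (G.run o d n).1 then 1 else 0) := by
        funext w c
        rw [trav_succ]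
        congr 1
        by_cases h1 : w = (G.run o d n).1
        · subst h1
          simp [hd, eq_comm]
        · have : ¬ ((G.run o d n).1 = w) := fun h => h1 h.symm
          simp [this, h1]
      rw [hT, inflow_add, inflow_single]
      rw [run_succ', if_neg hd]
      have hout : SwitchGraph.outflow (fun w c => G.traversals o d n w c +
          (if w = (G.run o d n).1 ∧ c = (G.run o d n).2 (G.run o d n).1 then 1 else 0)) v =
          SwitchGraph.outflow (G.traversals o d n) v + (if v = (G.run o d n).1 then 1 else 0) := by
        unfold SwitchGraph.outflow
        cases hb : (G.run o d n).2 (G.run o d n).1 <;> simp [hb] <;> omega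
      rw [hout]
      simp only [SwitchGraph.step]
      by_cases h1 : G.succ (G.run o d n).1 ((G.run o d n).2 (G.run o d n).1) = v <;>
        by_cases h2 : v = (G.run o d n).1 <;>
          simp [h1, h2, eq_comm] at ih ⊢ <;> omega

lemma L3 (x : V → Bool → ℕ) (hx : G.IsSwitchingFlow o d x) :
    ∀ n v b, G.traversals o d n v b ≤ x v b := by
  intro n
  induction n with
  | zero => intro v b; simp [trav_zero]
  | succ n ih =>
    intro v b
    rw [trav_succ]
    split
    case isFalse => simpa using ih v b
    case isTrue h =>
      obtain ⟨h1, h2, h3⟩ := h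
      rcases Nat.lt_or_ge (G.traversals o d n v b) (x v b) with hlt | hge
      · omega
      have heq : x v b = G.traversals o d n v b := le_antisymm hge (ih v b)
      exfalso
      have hbal := hx.2 v
      have hL1 := L1 G o d n v h2
      rw [h3] at hL1
      -- establish outflow equality
      have ihf := ih v false
      have iht := ih v true
      have hb1 := hbal.1
      have hb2 := hbal.2
      have hout : x v false + x v true =
          G.traversals o d n v false + G.traversals o d n v true := by
        cases b <;> simp at hL1 <;> omega
      have hcons := hx.1 v
      rw [if_neg h2] at hcons
      have hL2 := L2 G o d n v
      rw [if_pos h1] at hL2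
      have hmono := inflow_mono G (G.traversals o d n) x (ih) v
      unfold SwitchGraph.outflow at hcons hL2
      omega

end Aux

/-- If the run terminates, its run profile is a switching flow, is the least element of the
set of switching flows under the componentwise order, and is the unique switching flow of
minimum total sum. -/
theorem stmt16 {V : Type} [Fintype V] [DecidableEq V] (G : SwitchGraph V) (o d : V)
    (hod : o ≠ d) (N : ℕ) (hN : (G.run o d N).1 = d) :
    G.IsSwitchingFlow o d (G.traversals o d N) ∧
    (∀ x, G.IsSwitchingFlow o d x → ∀ v b, G.traversals o d N v b ≤ x v b) ∧
    (∀ x, G.IsSwitchingFlow o d x →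
      (∑ v : V, ∑ b : Bool, x v b) = (∑ v : V, ∑ b : Bool, G.traversals o d N v b) →
      x = G.traversals o d N) := by
  have hflow : G.IsSwitchingFlow o d (G.traversals o d N) := by
    constructor
    · intro v
      have h := L2 G o d N v
      rw [hN] at h
      have hrw : (if d = v then 1 else 0) = (if v = d then 1 else 0 : ℕ) := by
        by_cases hv : v = d
        · simp [hv]
        · rw [if_neg (fun h : d = v => hv h.symm), if_neg hv]
      rw [hrw] at h
      unfold SwitchGraph.outflow at h ⊢
      omega
    · intro v
      by_cases hv : v = d
      · subst hv; simp [trav_d]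
      · have := L1 G o d N v hv
        split at this <;> omega
  refine ⟨hflow, fun x hx => L3 G o d x hx N, ?_⟩
  intro x hx hsum
  have hle : ∀ v b, G.traversals o d N v b ≤ x v b := L3 G o d x hx N
  funext v b
  by_contra hne
  have hlt : G.traversals o d N v b < x v b := lt_of_le_of_ne (hle v b) (fun h => hne h.symm)
  have : (∑ v : V, ∑ b : Bool, G.traversals o d N v b) < ∑ v : V, ∑ b : Bool, x v b := by
    refine Finset.sum_lt_sum (fun i _ => Finset.sum_le_sum fun j _ => hle i j)
      ⟨v, Finset.mem_univ v, Finset.sum_lt_sum (fun j _ => hle v j)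
        ⟨b, Finset.mem_univ b, hlt⟩⟩
  omega
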